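/- Assume d ≥ 1, L ≥ 1, γ > 0, λ > 0. There exists ᾱ > 0 such that for every step size α with 0 < α ≤ ᾱ, the PGD map g_α is differentiable at (0, 0), its Jacobian (the derivative of g_α at (0, 0)) is invertible, and this Jacobian has two real eigenvalues, one lying strictly between 0 and 1 and the other strictly greater than 1. -/

import Mathlib

open MeasureTheory ProbabilityTheory Real Filter

noncomputable def erf (u : ℝ) : ℝ := 2 / Real.sqrt Real.pi * ∫ r in (0:ℝ)..u, Real.exp (-r ^ 2)

noncomputable def zeta (t s : ℝ) : ℝ := ∫ g, erf (t + g) ^ 2 ∂(gaussianReal 0 s.toNNReal)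

/-- The reduced risk `R(κ, ν)` on the invariant manifold. -/
noncomputable def Rred (d L : ℕ) (γ lam ε : ℝ) (κ ν : ℝ) : ℝ :=
  γ ^ 2 - 2 * γ ^ 2 * ν * erf (lam * Real.sqrt ((d : ℝ) / 2) * κ /
      Real.sqrt (1 + 2 * lam ^ 2 * γ ^ 2))
    + γ ^ 2 * zeta (lam * Real.sqrt ((d : ℝ) / 2) * κ) (lam ^ 2 * γ ^ 2)
    + ((L : ℝ) - 1) * zeta 0 (lam ^ 2) + ε ^ 2

/-- Partial derivative `∂κR` of the reduced risk with respect to its first argument. -/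
noncomputable def dkR (d L : ℕ) (γ lam ε : ℝ) (κ ν : ℝ) : ℝ :=
  deriv (fun x => Rred d L γ lam ε x ν) κ

/-- Partial derivative `∂νR` of the reduced risk with respect to its second argument. -/
noncomputable def dvR (d L : ℕ) (γ lam ε : ℝ) (κ ν : ℝ) : ℝ :=
  deriv (fun y => Rred d L γ lam ε κ y) ν

/-- The PGD map `g_α`. -/
noncomputable def pgd (d L : ℕ) (γ lam ε α : ℝ) (p : ℝ × ℝ) : ℝ × ℝ :=
  ((p.1 - α * dkR d L γ lam ε p.1 p.2 * (1 - p.1 ^ 2)) /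
      Real.sqrt (1 + α ^ 2 * (dkR d L γ lam ε p.1 p.2) ^ 2 * (1 - p.1 ^ 2)),
   (p.2 - α * dvR d L γ lam ε p.1 p.2 * (1 - p.2 ^ 2)) /
      Real.sqrt (1 + α ^ 2 * (dvR d L γ lam ε p.1 p.2) ^ 2 * (1 - p.2 ^ 2)))

/-- The square `[−1, 1]²`. -/
def sqIcc : Set (ℝ × ℝ) := {p | p.1 ∈ Set.Icc (-1 : ℝ) 1 ∧ p.2 ∈ Set.Icc (-1 : ℝ) 1}

open scoped NNReal

noncomputable def erfd (u : ℝ) : ℝ := 2 / Real.sqrt Real.pi * Real.exp (-u ^ 2)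

lemma hasDerivAt_erf (u : ℝ) : HasDerivAt erf (erfd u) u := by
  have h : HasDerivAt (fun v => ∫ r in (0:ℝ)..v, Real.exp (-r ^ 2)) (Real.exp (-u ^ 2)) u := by
    refine (Continuous.integral_hasStrictDerivAt ?_ 0 u).hasDerivAt
    continuity
  exact h.const_mul (2 / Real.sqrt Real.pi)

lemma continuous_erf : Continuous erf := by
  have : Differentiable ℝ erf := fun u => (hasDerivAt_erf u).differentiableAt
  exact this.continuous

lemma erf_zero : erf 0 = 0 := by simp [erf]

lemma erf_neg (u : ℝ) : erf (-u) = - erf u := by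
  unfold erf
  rw [← mul_neg]
  congr 1
  have : (∫ r in (0:ℝ)..(-u), Real.exp (-r ^ 2)) = ∫ r in (0:ℝ)..(-u), Real.exp (-(-r) ^ 2) := by
    simp
  rw [this, intervalIntegral.integral_comp_neg (fun r => Real.exp (-r ^ 2))]
  simp [intervalIntegral.integral_symm (0:ℝ) u]

lemma abs_erf_le (u : ℝ) : |erf u| ≤ 1 := by
  have hint : ∀ v : ℝ, 0 ≤ v → |∫ r in (0:ℝ)..v, Real.exp (-r ^ 2)| ≤ Real.sqrt Real.pi / 2 := by
    intro v hv
    have h1 : IntegrableOn (fun r => Real.exp (-r ^ 2)) (Set.Ioi (0:ℝ)) := by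
      have := (integrableOn_Ioi_exp_neg_mul_sq_iff (b := (1:ℝ))).2 one_pos
      simpa using this
    have h2 : (∫ r in (0:ℝ)..v, Real.exp (-r ^ 2)) ≤ ∫ r in Set.Ioi (0:ℝ), Real.exp (-r ^ 2) := by
      rw [intervalIntegral.integral_of_le hv]
      refine setIntegral_mono_set h1 ?_ ?_
      · exact Filter.Eventually.of_forall fun r => (Real.exp_pos _).le
      · exact Filter.Eventually.of_forall fun r hr => hr.1
    have h3 : (∫ r in Set.Ioi (0:ℝ), Real.exp (-r ^ 2)) = Real.sqrt Real.pi / 2 := by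
      have := integral_gaussian_Ioi 1
      simpa using this
    have h4 : 0 ≤ ∫ r in (0:ℝ)..v, Real.exp (-r ^ 2) :=
      intervalIntegral.integral_nonneg hv fun r _ => (Real.exp_pos _).le
    rw [abs_of_nonneg h4]
    rw [h3] at h2; exact h2
  have key : ∀ v : ℝ, 0 ≤ v → |erf v| ≤ 1 := by
    intro v hv
    unfold erf
    rw [abs_mul]
    have hpi : (0:ℝ) < Real.sqrt Real.pi := Real.sqrt_pos.2 Real.pi_pos
    calc |2 / Real.sqrt Real.pi| * |∫ r in (0:ℝ)..v, Real.exp (-r ^ 2)|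
        ≤ (2 / Real.sqrt Real.pi) * (Real.sqrt Real.pi / 2) := by
          apply mul_le_mul _ (hint v hv) (abs_nonneg _) (by positivity)
          rw [abs_of_nonneg (by positivity)]
      _ = 1 := by field_simp
  rcases le_total 0 u with h | h
  · exact key u h
  · have := key (-u) (by linarith)
    rwa [erf_neg, abs_neg] at this

lemma abs_erfd_le (u : ℝ) : |erfd u| ≤ 2 / Real.sqrt Real.pi := by
  unfold erfd
  rw [abs_mul, abs_of_nonneg (by positivity : (0:ℝ) ≤ 2 / Real.sqrt Real.pi)]
  have : |Real.exp (-u ^ 2)| ≤ 1 := by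
    rw [abs_of_pos (Real.exp_pos _)]
    exact Real.exp_le_one_iff.2 (by nlinarith [sq_nonneg u])
  nlinarith [abs_nonneg (Real.exp (-u^2)), (by positivity : (0:ℝ) ≤ 2 / Real.sqrt Real.pi)]

section
variable {μ : Measure ℝ} [IsProbabilityMeasure μ]

lemma hasDerivAt_integral_param
    (f f' : ℝ → ℝ) (hf : ∀ x, HasDerivAt f (f' x) x) (hf'c : Continuous f')
    (C0 C : ℝ) (hC0 : ∀ x, |f x| ≤ C0) (hC : ∀ x, |f' x| ≤ C) (t : ℝ) :
    HasDerivAt (fun t => ∫ g, f (t + g) ∂μ) (∫ g, f' (t + g) ∂μ) t := by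
  have hfc : Continuous f := by
    have : Differentiable ℝ f := fun x => (hf x).differentiableAt
    exact this.continuous
  have key := hasDerivAt_integral_of_dominated_loc_of_deriv_le
    (F := fun t g => f (t + g)) (F' := fun t g => f' (t + g))
    (bound := fun _ => C) (μ := μ) (x₀ := t) (Metric.ball_mem_nhds t one_pos)
    (Filter.Eventually.of_forall fun x =>
      ((hfc.comp (continuous_const.add continuous_id)).aestronglyMeasurable))
    (by
      refine Integrable.mono' (integrable_const C0)
        ((hfc.comp (continuous_const.add continuous_id)).aestronglyMeasurable) ?_
      exact Filter.Eventually.of_forall fun g => by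
        simpa [Real.norm_eq_abs] using hC0 (t + g))
    ((hf'c.comp (continuous_const.add continuous_id)).aestronglyMeasurable)
    (Filter.Eventually.of_forall fun g x _ => by
      simpa [Real.norm_eq_abs] using hC (x + g))
    (integrable_const C)
    (Filter.Eventually.of_forall fun g x _ => by
      have h1 : HasDerivAt (fun t : ℝ => t + g) 1 x := (hasDerivAt_id x).add_const g
      have := (hf (x + g)).comp x h1; simp only [mul_one] at this; exact this)
  exact key.2

lemma integral_odd_eq_zero {v : ℝ≥0} (f : ℝ → ℝ) (hfc : Continuous f)
    (hodd : ∀ x, f (-x) = - f x) :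
    ∫ g, f g ∂(gaussianReal 0 v) = 0 := by
  have hmap : (gaussianReal 0 v).map ((-1 : ℝ) * ·) = gaussianReal 0 v := by
    rw [gaussianReal_map_const_mul (-1 : ℝ)]
    norm_num
  have h1 : ∫ g, f g ∂(gaussianReal 0 v) = ∫ g, f ((-1) * g) ∂(gaussianReal 0 v) := by
    conv_lhs => rw [← hmap]
    rw [integral_map (by fun_prop) (hfc.aestronglyMeasurable)]
  have h2 : ∫ g, f ((-1) * g) ∂(gaussianReal 0 v) = - ∫ g, f g ∂(gaussianReal 0 v) := by
    rw [← integral_neg]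
    congr 1
    ext g
    simpa using hodd g
  linarith [h1, h2]

end

noncomputable def erfdd (u : ℝ) : ℝ := 2 / Real.sqrt Real.pi * (Real.exp (-u ^ 2) * (-(2 * u)))
noncomputable def psi (s t : ℝ) : ℝ :=
  ∫ g, 2 * erf (t + g) * erfd (t + g) ∂(gaussianReal 0 s.toNNReal)


lemma continuous_erfd : Continuous erfd := by unfold erfd; continuity
lemma continuous_erfdd : Continuous erfdd := by unfold erfdd; continuity

lemma erfd_neg (u : ℝ) : erfd (-u) = erfd u := by simp [erfd]

lemma erfd_zero : erfd 0 = 2 / Real.sqrt Real.pi := by simp [erfd]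

lemma hasDerivAt_erfd (u : ℝ) : HasDerivAt erfd (erfdd u) u := by
  have h : HasDerivAt (fun u : ℝ => -(u ^ 2)) (-(2 * u)) u := by
    have := ((hasDerivAt_id u).pow 2).neg; simp at this; exact this
  have h2 := (h.exp).const_mul (2 / Real.sqrt Real.pi)
  unfold erfd erfdd
  exact h2

lemma abs_exp_mul_le (x : ℝ) : |x| * Real.exp (-x ^ 2) ≤ 1 := by
  have h1 : Real.exp (x ^ 2) * Real.exp (-x ^ 2) = 1 := by
    rw [← Real.exp_add]; simp
  have h2 : x ^ 2 + 1 ≤ Real.exp (x ^ 2) := by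
    have := Real.add_one_le_exp (x ^ 2); linarith
  have h3 : |x| ≤ x ^ 2 + 1 := by nlinarith [sq_abs x, sq_nonneg (|x| - 1)]
  have h4 : (0:ℝ) < Real.exp (-x ^ 2) := Real.exp_pos _
  nlinarith [mul_le_mul_of_nonneg_right (h3.trans h2) h4.le]

lemma abs_erfdd_le (u : ℝ) : |erfdd u| ≤ 4 / Real.sqrt Real.pi := by
  have hpi : (0:ℝ) < Real.sqrt Real.pi := Real.sqrt_pos.2 Real.pi_pos
  have h : |erfdd u| = 2 / Real.sqrt Real.pi * (2 * (|u| * Real.exp (-u ^ 2))) := by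
    unfold erfdd
    rw [abs_mul, abs_of_nonneg (by positivity : (0:ℝ) ≤ 2 / Real.sqrt Real.pi), abs_mul,
      abs_of_nonneg (Real.exp_pos _).le, abs_neg, abs_mul]
    simp [abs_of_nonneg, mul_comm, mul_assoc, mul_left_comm]
  rw [h]
  have h1 := abs_exp_mul_le u
  have h2 : (0:ℝ) ≤ 2 / Real.sqrt Real.pi := by positivity
  calc 2 / Real.sqrt Real.pi * (2 * (|u| * Real.exp (-u ^ 2)))
      ≤ 2 / Real.sqrt Real.pi * (2 * 1) := by
        apply mul_le_mul_of_nonneg_left _ h2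
        linarith
    _ = 4 / Real.sqrt Real.pi := by ring

lemma zeta_hasDerivAt (s t : ℝ) : HasDerivAt (fun t => zeta t s) (psi s t) t := by
  have hf : ∀ x, HasDerivAt (fun x => erf x ^ 2) (2 * erf x * erfd x) x := fun x => by
    have := (hasDerivAt_erf x).pow 2; simp at this; exact this
  have h := hasDerivAt_integral_param (μ := gaussianReal 0 s.toNNReal)
    (fun x => erf x ^ 2) (fun x => 2 * erf x * erfd x) hf
    ((continuous_const.mul continuous_erf).mul continuous_erfd) 1 (4 / Real.sqrt Real.pi)
    (fun x => by
      rw [abs_pow]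
      exact pow_le_one₀ (abs_nonneg _) (abs_erf_le x))
    (fun x => by
      rw [abs_mul, abs_mul, abs_two]
      have h1 := abs_erf_le x
      have h2 := abs_erfd_le x
      have h3 := mul_le_mul h1 h2 (abs_nonneg _) zero_le_one
      have h4 : 2 * (1 * (2 / Real.sqrt Real.pi)) = 4 / Real.sqrt Real.pi := by ring
      nlinarith [h3, h4]) t
  exact h

lemma psi_hasDerivAt (s t : ℝ) :
    HasDerivAt (psi s) (∫ g, (2 * (erfd (t + g) * erfd (t + g) + erf (t + g) * erfdd (t + g)))
      ∂(gaussianReal 0 s.toNNReal)) t := by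
  have hf : ∀ x, HasDerivAt (fun x => 2 * erf x * erfd x)
      (2 * (erfd x * erfd x + erf x * erfdd x)) x := fun x => by
    have := (((hasDerivAt_erf x).const_mul 2).mul (hasDerivAt_erfd x))
    exact this.congr_deriv (by ring)
  have hpi : (0:ℝ) < Real.sqrt Real.pi := Real.sqrt_pos.2 Real.pi_pos
  have h := hasDerivAt_integral_param (μ := gaussianReal 0 s.toNNReal)
    (fun x => 2 * erf x * erfd x) (fun x => 2 * (erfd x * erfd x + erf x * erfdd x)) hf
    (continuous_const.mul ((continuous_erfd.mul continuous_erfd).add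
      (continuous_erf.mul continuous_erfdd))) (4 / Real.sqrt Real.pi)
    (2 * ((2 / Real.sqrt Real.pi) * (2 / Real.sqrt Real.pi) + 4 / Real.sqrt Real.pi))
    (fun x => by
      rw [abs_mul, abs_mul, abs_two]
      have h1 := abs_erf_le x
      have h2 := abs_erfd_le x
      have h3 := mul_le_mul h1 h2 (abs_nonneg _) zero_le_one
      have h4 : 2 * (1 * (2 / Real.sqrt Real.pi)) = 4 / Real.sqrt Real.pi := by ring
      nlinarith [h3, h4])
    (fun x => by
      have h1 := abs_erf_le x
      have h2 := abs_erfd_le x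
      have h3 := abs_erfdd_le x
      have hb : |erfd x * erfd x + erf x * erfdd x| ≤
          (2 / Real.sqrt Real.pi) * (2 / Real.sqrt Real.pi) + 4 / Real.sqrt Real.pi := by
        calc |erfd x * erfd x + erf x * erfdd x|
            ≤ |erfd x * erfd x| + |erf x * erfdd x| := abs_add_le _ _
          _ ≤ (2 / Real.sqrt Real.pi) * (2 / Real.sqrt Real.pi) + 4 / Real.sqrt Real.pi := by
              rw [abs_mul, abs_mul]
              have h4 : |erf x| * |erfdd x| ≤ 1 * (4 / Real.sqrt Real.pi) :=
                mul_le_mul h1 h3 (abs_nonneg _) one_pos.le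
              have h5 : |erfd x| * |erfd x| ≤ (2 / Real.sqrt Real.pi) * (2 / Real.sqrt Real.pi) :=
                mul_le_mul h2 h2 (abs_nonneg _) (by positivity)
              linarith [h4, h5]
      calc |2 * (erfd x * erfd x + erf x * erfdd x)|
          = 2 * |erfd x * erfd x + erf x * erfdd x| := by rw [abs_mul, abs_two]
        _ ≤ 2 * ((2 / Real.sqrt Real.pi) * (2 / Real.sqrt Real.pi) + 4 / Real.sqrt Real.pi) := by
            linarith) t
  exact h

lemma psi_zero (s : ℝ) : psi s 0 = 0 := by
  unfold psi
  simp only [zero_add]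
  exact integral_odd_eq_zero (fun g => 2 * erf g * erfd g)
    ((continuous_const.mul continuous_erf).mul continuous_erfd)
    (fun x => by
      show 2 * erf (-x) * erfd (-x) = -(2 * erf x * erfd x)
      rw [erf_neg, erfd_neg]; ring)

lemma hasDerivAt_comp_linear {f : ℝ → ℝ} {fd : ℝ → ℝ} (hf : ∀ x, HasDerivAt f (fd x) x)
    (a q x : ℝ) : HasDerivAt (fun x => f (a * x / q)) (fd (a * x / q) * (a / q)) x := by
  have h0 : HasDerivAt (fun x : ℝ => a * x / q) (a / q) x := by
    simpa using ((hasDerivAt_id x).const_mul a).div_const q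
  exact (hf (a * x / q)).comp x h0

lemma hasDerivAt_comp_mul {f : ℝ → ℝ} {fd : ℝ} {a x : ℝ} (hf : HasDerivAt f fd (a * x)) :
    HasDerivAt (fun x => f (a * x)) (fd * a) x := by
  have h0 : HasDerivAt (fun x : ℝ => a * x) a x := by
    simpa using (hasDerivAt_id x).const_mul a
  exact hf.comp x h0

lemma dvR_eq (d L : ℕ) (γ lam ε κ ν : ℝ) :
    dvR d L γ lam ε κ ν = -(2 * γ ^ 2) * erf (lam * Real.sqrt ((d : ℝ) / 2) * κ /
      Real.sqrt (1 + 2 * lam ^ 2 * γ ^ 2)) := by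
  set E := erf (lam * Real.sqrt ((d : ℝ) / 2) * κ / Real.sqrt (1 + 2 * lam ^ 2 * γ ^ 2)) with hE
  have h : HasDerivAt (fun y => Rred d L γ lam ε κ y) (-(2 * γ ^ 2 * 1 * E)) ν := by
    simp only [Rred]
    exact ((((hasDerivAt_id ν).const_mul (2 * γ ^ 2)).mul_const E).const_sub
      (γ ^ 2)).add_const _ |>.add_const _ |>.add_const _
  rw [dvR, h.deriv]; ring

lemma dkR_eq (d L : ℕ) (γ lam ε κ ν : ℝ) :
    dkR d L γ lam ε κ ν =
      -(2 * γ ^ 2 * ν) * (erfd (lam * Real.sqrt ((d : ℝ) / 2) * κ /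
          Real.sqrt (1 + 2 * lam ^ 2 * γ ^ 2)) *
        (lam * Real.sqrt ((d : ℝ) / 2) / Real.sqrt (1 + 2 * lam ^ 2 * γ ^ 2)))
      + γ ^ 2 * (psi (lam ^ 2 * γ ^ 2) (lam * Real.sqrt ((d : ℝ) / 2) * κ) *
          (lam * Real.sqrt ((d : ℝ) / 2))) := by
  have h1 := hasDerivAt_comp_linear hasDerivAt_erf (lam * Real.sqrt ((d : ℝ) / 2))
    (Real.sqrt (1 + 2 * lam ^ 2 * γ ^ 2)) κ
  have h2 : HasDerivAt (fun x => zeta (lam * Real.sqrt ((d : ℝ) / 2) * x) (lam ^ 2 * γ ^ 2))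
      (psi (lam ^ 2 * γ ^ 2) (lam * Real.sqrt ((d : ℝ) / 2) * κ) *
        (lam * Real.sqrt ((d : ℝ) / 2))) κ :=
    hasDerivAt_comp_mul (zeta_hasDerivAt (lam ^ 2 * γ ^ 2) _)
  have h : HasDerivAt (fun x => Rred d L γ lam ε x ν)
      (0 - 2 * γ ^ 2 * ν * (erfd (lam * Real.sqrt ((d : ℝ) / 2) * κ /
          Real.sqrt (1 + 2 * lam ^ 2 * γ ^ 2)) *
        (lam * Real.sqrt ((d : ℝ) / 2) / Real.sqrt (1 + 2 * lam ^ 2 * γ ^ 2)))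
       + γ ^ 2 * (psi (lam ^ 2 * γ ^ 2) (lam * Real.sqrt ((d : ℝ) / 2) * κ) *
          (lam * Real.sqrt ((d : ℝ) / 2)))) κ := by
    simp only [Rred]
    exact (((hasDerivAt_const κ (γ ^ 2)).sub (h1.const_mul (2 * γ ^ 2 * ν))).add
      (h2.const_mul (γ ^ 2))).add_const _ |>.add_const _
  rw [dkR, h.deriv]; ring

lemma pgd_helper {p₀ : ℝ × ℝ} (α : ℝ) (F φ : ℝ × ℝ → ℝ) (LF Lφ : ℝ × ℝ →L[ℝ] ℝ)
    (hF : HasFDerivAt F LF p₀) (hφ : HasFDerivAt φ Lφ p₀)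
    (hF0 : F p₀ = 0) (hφ0 : φ p₀ = 0) :
    HasFDerivAt (fun p => (φ p - α * F p * (1 - φ p ^ 2)) /
      Real.sqrt (1 + α ^ 2 * F p ^ 2 * (1 - φ p ^ 2))) (Lφ - α • LF) p₀ := by
  have hone : HasFDerivAt (fun p => 1 - φ p ^ 2) (0 : ℝ × ℝ →L[ℝ] ℝ) p₀ := by
    have h2 : HasFDerivAt (fun p => φ p * φ p) (φ p₀ • Lφ + φ p₀ • Lφ) p₀ := hφ.mul hφ
    have h3 := h2.const_sub 1
    have h4 : (fun p : ℝ × ℝ => 1 - φ p ^ 2) = fun p => 1 - φ p * φ p := by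
      funext p; ring
    rw [h4]
    exact h3.congr_fderiv (by rw [hφ0]; refine ContinuousLinearMap.ext fun v => ?_; simp)
  have hN : HasFDerivAt (fun p => φ p - α * F p * (1 - φ p ^ 2)) (Lφ - α • LF) p₀ := by
    have ha : HasFDerivAt (fun p => α * F p) (α • LF) p₀ := hF.const_mul α
    have hm := ha.mul hone
    have hm' : HasFDerivAt (fun p => α * F p * (1 - φ p ^ 2)) (α • LF) p₀ :=
      hm.congr_fderiv (by rw [hF0, hφ0]; refine ContinuousLinearMap.ext fun v => ?_; simp)
    exact hφ.sub hm'
  have hIval : 1 + α ^ 2 * F p₀ ^ 2 * (1 - φ p₀ ^ 2) = 1 := by rw [hF0]; ring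
  have hI : HasFDerivAt (fun p => 1 + α ^ 2 * F p ^ 2 * (1 - φ p ^ 2))
      (0 : ℝ × ℝ →L[ℝ] ℝ) p₀ := by
    have hsq : HasFDerivAt (fun p => F p * F p) (F p₀ • LF + F p₀ • LF) p₀ := hF.mul hF
    have h5 := hsq.const_mul (α ^ 2)
    have h6 := h5.mul hone
    have h7 := h6.const_add 1
    have h8 : (fun p : ℝ × ℝ => 1 + α ^ 2 * F p ^ 2 * (1 - φ p ^ 2))
        = fun p => 1 + α ^ 2 * (F p * F p) * (1 - φ p ^ 2) := by funext p; ring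
    rw [h8]
    exact h7.congr_fderiv (by rw [hF0]; refine ContinuousLinearMap.ext fun v => ?_; simp)
  have hW : HasFDerivAt (fun p => Real.sqrt (1 + α ^ 2 * F p ^ 2 * (1 - φ p ^ 2)))
      (0 : ℝ × ℝ →L[ℝ] ℝ) p₀ := by
    have hs := Real.hasDerivAt_sqrt (x := 1 + α ^ 2 * F p₀ ^ 2 * (1 - φ p₀ ^ 2))
      (by rw [hIval]; norm_num)
    have hc := hs.comp_hasFDerivAt p₀ hI
    exact hc.congr_fderiv (by refine ContinuousLinearMap.ext fun v => ?_; simp)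
  have hWval : Real.sqrt (1 + α ^ 2 * F p₀ ^ 2 * (1 - φ p₀ ^ 2)) = 1 := by
    rw [hIval]; exact Real.sqrt_one
  have hinv : HasFDerivAt (fun p => (Real.sqrt (1 + α ^ 2 * F p ^ 2 * (1 - φ p ^ 2)))⁻¹)
      (0 : ℝ × ℝ →L[ℝ] ℝ) p₀ := by
    have hi := hasDerivAt_inv (x := Real.sqrt (1 + α ^ 2 * F p₀ ^ 2 * (1 - φ p₀ ^ 2)))
      (by rw [hWval]; norm_num)
    have hc := hi.comp_hasFDerivAt p₀ hW
    exact hc.congr_fderiv (by refine ContinuousLinearMap.ext fun v => ?_; simp)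
  have hNval : φ p₀ - α * F p₀ * (1 - φ p₀ ^ 2) = 0 := by rw [hF0, hφ0]; ring
  have hq := hN.mul hinv
  have hfun : (fun p => (φ p - α * F p * (1 - φ p ^ 2)) /
        Real.sqrt (1 + α ^ 2 * F p ^ 2 * (1 - φ p ^ 2)))
      = fun p => (φ p - α * F p * (1 - φ p ^ 2)) *
        (Real.sqrt (1 + α ^ 2 * F p ^ 2 * (1 - φ p ^ 2)))⁻¹ := by
    funext p; rw [div_eq_mul_inv]
  rw [hfun]
  exact hq.congr_fderiv (by rw [hNval, hWval]; refine ContinuousLinearMap.ext fun v => ?_; simp)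

lemma psi_hasDerivAt' (s t : ℝ) : ∃ w, HasDerivAt (psi s) w t := ⟨_, psi_hasDerivAt s t⟩

lemma hasFDerivAt_Fgen (A Q s γ w : ℝ) (hw : HasDerivAt (psi s) w 0) :
    HasFDerivAt (fun p : ℝ × ℝ =>
        -(2 * γ ^ 2 * p.2) * (erfd (A * p.1 / Q) * (A / Q)) + γ ^ 2 * (psi s (A * p.1) * A))
      ((γ ^ 2 * (w * A * A)) • ContinuousLinearMap.fst ℝ ℝ ℝ +
        (-(2 * γ ^ 2) * (2 / Real.sqrt Real.pi) * (A / Q)) • ContinuousLinearMap.snd ℝ ℝ ℝ)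
      ((0, 0) : ℝ × ℝ) := by
  have u1 : HasFDerivAt (fun p : ℝ × ℝ => -(2 * γ ^ 2 * p.2))
      (-((2 * γ ^ 2) • ContinuousLinearMap.snd ℝ ℝ ℝ)) (0, 0) :=
    ((hasFDerivAt_snd.const_mul (2 * γ ^ 2)).neg)
  obtain ⟨kd, hk⟩ : ∃ kd, HasDerivAt (fun x : ℝ => erfd (A * x / Q) * (A / Q)) kd 0 :=
    ⟨_, (hasDerivAt_comp_linear hasDerivAt_erfd A Q 0).mul_const (A / Q)⟩
  have u2 : HasFDerivAt (fun p : ℝ × ℝ => erfd (A * p.1 / Q) * (A / Q))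
      (kd • ContinuousLinearMap.fst ℝ ℝ ℝ) (0, 0) :=
    by
      have := hk.comp_hasFDerivAt ((0, 0) : ℝ × ℝ)
        (hasFDerivAt_fst : HasFDerivAt Prod.fst (ContinuousLinearMap.fst ℝ ℝ ℝ) ((0,0) : ℝ × ℝ))
      exact this
  have t1 := u1.mul u2
  have hw0 : HasDerivAt (psi s) w (A * 0) := by rw [mul_zero]; exact hw
  have k2 : HasDerivAt (fun x : ℝ => γ ^ 2 * (psi s (A * x) * A)) (γ ^ 2 * (w * A * A)) 0 :=
    ((hasDerivAt_comp_mul hw0).mul_const A).const_mul (γ ^ 2)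
  have t2 : HasFDerivAt (fun p : ℝ × ℝ => γ ^ 2 * (psi s (A * p.1) * A))
      ((γ ^ 2 * (w * A * A)) • ContinuousLinearMap.fst ℝ ℝ ℝ) (0, 0) :=
    by
      have := k2.comp_hasFDerivAt ((0, 0) : ℝ × ℝ)
        (hasFDerivAt_fst : HasFDerivAt Prod.fst (ContinuousLinearMap.fst ℝ ℝ ℝ) ((0,0) : ℝ × ℝ))
      exact this
  have h := t1.add t2
  refine h.congr_fderiv ?_
  refine ContinuousLinearMap.ext fun v => ?_
  simp [erfd_zero]
  ring

lemma hasFDerivAt_Ggen (A Q γ : ℝ) :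
    HasFDerivAt (fun p : ℝ × ℝ => -(2 * γ ^ 2) * erf (A * p.1 / Q))
      ((-(2 * γ ^ 2) * (2 / Real.sqrt Real.pi) * (A / Q)) • ContinuousLinearMap.fst ℝ ℝ ℝ)
      ((0, 0) : ℝ × ℝ) := by
  have k : HasDerivAt (fun x : ℝ => -(2 * γ ^ 2) * erf (A * x / Q))
      (-(2 * γ ^ 2) * (erfd (A * 0 / Q) * (A / Q))) 0 :=
    (hasDerivAt_comp_linear hasDerivAt_erf A Q 0).const_mul (-(2 * γ ^ 2))
  have t := k.comp_hasFDerivAt ((0, 0) : ℝ × ℝ)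
    (hasFDerivAt_fst : HasFDerivAt Prod.fst (ContinuousLinearMap.fst ℝ ℝ ℝ) ((0,0) : ℝ × ℝ))
  refine t.congr_fderiv ?_
  refine ContinuousLinearMap.ext fun v => ?_
  simp only [ContinuousLinearMap.smul_apply, ContinuousLinearMap.coe_fst', smul_eq_mul,
    mul_zero, zero_div, erfd_zero]
  ring

lemma final_part (hh b : ℝ) (hb : b < 0) :
    ∃ abar : ℝ, 0 < abar ∧ ∀ α : ℝ, 0 < α → α ≤ abar →
      ∀ T : (ℝ × ℝ) →L[ℝ] (ℝ × ℝ),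
        (∀ u v : ℝ, T (u, v) = (u - α * (hh * u + b * v), v - α * (b * u))) →
        Function.Bijective T ∧
        ∃ (μ₁ μ₂ : ℝ) (v₁ v₂ : ℝ × ℝ), 0 < μ₁ ∧ μ₁ < 1 ∧ 1 < μ₂ ∧ v₁ ≠ 0 ∧ v₂ ≠ 0 ∧
          T v₁ = μ₁ • v₁ ∧ T v₂ = μ₂ • v₂ := by
  have hb2 : 0 < b ^ 2 := by nlinarith
  set Δ := Real.sqrt (hh ^ 2 + 4 * b ^ 2) with hΔdef
  have hΔ2 : Δ ^ 2 = hh ^ 2 + 4 * b ^ 2 := Real.sq_sqrt (by positivity)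
  have hΔ0 : 0 ≤ Δ := Real.sqrt_nonneg _
  set μp := (hh + Δ) / 2 with hμpd
  set μm := (hh - Δ) / 2 with hμmd
  have hμp : 0 < μp := by rw [hμpd]; nlinarith [hΔ2, hb2, hΔ0]
  have hμm : μm < 0 := by rw [hμmd]; nlinarith [hΔ2, hb2, hΔ0]
  have heigp : μp ^ 2 = hh * μp + b ^ 2 := by rw [hμpd]; linear_combination hΔ2 / 4
  have heigm : μm ^ 2 = hh * μm + b ^ 2 := by rw [hμmd]; linear_combination hΔ2 / 4
  refine ⟨1 / (2 * μp), by positivity, fun α hα hle T hT => ?_⟩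
  have hαμp : α * μp ≤ 1 / 2 := by
    have h := mul_le_mul_of_nonneg_right hle hμp.le
    calc α * μp ≤ (1 / (2 * μp)) * μp := h
      _ = 1 / 2 := by field_simp
  have hαμm : α * μm < 0 := mul_neg_of_pos_of_neg hα hμm
  have hdet2 : 1 - α * hh - α ^ 2 * b ^ 2 = (1 - α * μp) * (1 - α * μm) := by
    rw [hμpd, hμmd]; linear_combination (α ^ 2 / 4) * hΔ2
  have hdetpos : 0 < (1 - α * μp) * (1 - α * μm) :=
    mul_pos (by linarith) (by linarith)
  have hker : ∀ z : ℝ × ℝ, T z = 0 → z = 0 := by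
    rintro ⟨u, v⟩ hz
    rw [hT u v] at hz
    have h1 : u - α * (hh * u + b * v) = 0 := congrArg Prod.fst hz
    have h2 : v - α * (b * u) = 0 := congrArg Prod.snd hz
    have hu : u * (1 - α * hh - α ^ 2 * b ^ 2) = 0 := by linear_combination h1 + α * b * h2
    have hu0 : u = 0 := by
      rcases mul_eq_zero.mp hu with h | h
      · exact h
      · exfalso; rw [hdet2] at h; nlinarith [hdetpos]
    have hv0 : v = 0 := by rw [hu0] at h2; simpa using h2
    simp [hu0, hv0]
  have hinj : Function.Injective T := by
    intro z1 z2 h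
    have h0 := hker (z1 - z2) (by rw [map_sub, h, sub_self])
    exact sub_eq_zero.mp h0
  have hsurj : Function.Surjective T :=
    (LinearMap.injective_iff_surjective (f := (T : ℝ × ℝ →ₗ[ℝ] ℝ × ℝ))).mp hinj
  refine ⟨⟨hinj, hsurj⟩, 1 - α * μp, 1 - α * μm, (μp, b), (μm, b),
    by linarith, by nlinarith [mul_pos hα hμp], by linarith,
    fun hcon => hb.ne (congrArg Prod.snd hcon),
    fun hcon => hb.ne (congrArg Prod.snd hcon), ?_, ?_⟩
  · have hs : (1 - α * μp) • ((μp, b) : ℝ × ℝ) = ((1 - α * μp) * μp, (1 - α * μp) * b) := rfl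
    rw [hT, hs, Prod.mk.injEq]
    exact ⟨by linear_combination α * heigp, by ring⟩
  · have hs : (1 - α * μm) • ((μm, b) : ℝ × ℝ) = ((1 - α * μm) * μm, (1 - α * μm) * b) := rfl
    rw [hT, hs, Prod.mk.injEq]
    exact ⟨by linear_combination α * heigm, by ring⟩

/-- For small enough step size, the PGD map is differentiable at `(0,0)`, its Jacobian
there is invertible, and this Jacobian has two real eigenvalues, one strictly between
`0` and `1` and the other strictly greater than `1`. -/
theorem stmt12 (d L : ℕ) (hd : 1 ≤ d) (hL : 1 ≤ L) (γ lam ε : ℝ)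
    (hγ : 0 < γ) (hlam : 0 < lam) (hε : 0 ≤ ε) :
    ∃ abar : ℝ, 0 < abar ∧ ∀ α : ℝ, 0 < α → α ≤ abar →
      DifferentiableAt ℝ (pgd d L γ lam ε α) (0, 0) ∧
      Function.Bijective (fderiv ℝ (pgd d L γ lam ε α) (0, 0)) ∧
      ∃ (μ₁ μ₂ : ℝ) (v₁ v₂ : ℝ × ℝ), 0 < μ₁ ∧ μ₁ < 1 ∧ 1 < μ₂ ∧
        v₁ ≠ 0 ∧ v₂ ≠ 0 ∧
        fderiv ℝ (pgd d L γ lam ε α) (0, 0) v₁ = μ₁ • v₁ ∧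
        fderiv ℝ (pgd d L γ lam ε α) (0, 0) v₂ = μ₂ • v₂ := by
  have hd2 : (0:ℝ) < (d : ℝ) / 2 := by
    have h1 : (1:ℝ) ≤ (d : ℝ) := by exact_mod_cast hd
    linarith
  have hApos : 0 < lam * Real.sqrt ((d : ℝ) / 2) := mul_pos hlam (Real.sqrt_pos.2 hd2)
  have hQpos : 0 < Real.sqrt (1 + 2 * lam ^ 2 * γ ^ 2) := Real.sqrt_pos.2 (by positivity)
  have hpi : (0:ℝ) < Real.sqrt Real.pi := Real.sqrt_pos.2 Real.pi_pos
  obtain ⟨w, hw⟩ := psi_hasDerivAt' (lam ^ 2 * γ ^ 2) 0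
  set A := lam * Real.sqrt ((d : ℝ) / 2) with hAdef
  set Q := Real.sqrt (1 + 2 * lam ^ 2 * γ ^ 2) with hQdef
  set b := -(2 * γ ^ 2) * (2 / Real.sqrt Real.pi) * (A / Q) with hbdef
  set hh := γ ^ 2 * (w * A * A) with hhdef
  have hb : b < 0 := by
    have hpos : 0 < 2 * γ ^ 2 * (2 / Real.sqrt Real.pi) * (A / Q) := by positivity
    have hbe : b = -(2 * γ ^ 2 * (2 / Real.sqrt Real.pi) * (A / Q)) := by rw [hbdef]; ring
    rw [hbe]; linarith
  -- derivative of the partials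
  have hF : HasFDerivAt (fun p : ℝ × ℝ => dkR d L γ lam ε p.1 p.2)
      (hh • ContinuousLinearMap.fst ℝ ℝ ℝ + b • ContinuousLinearMap.snd ℝ ℝ ℝ) (0, 0) := by
    have hFeq : (fun p : ℝ × ℝ => dkR d L γ lam ε p.1 p.2)
        = fun p : ℝ × ℝ => -(2 * γ ^ 2 * p.2) * (erfd (A * p.1 / Q) * (A / Q))
            + γ ^ 2 * (psi (lam ^ 2 * γ ^ 2) (A * p.1) * A) :=
      funext fun p => dkR_eq d L γ lam ε p.1 p.2
    rw [hFeq, hhdef, hbdef]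
    exact hasFDerivAt_Fgen A Q (lam ^ 2 * γ ^ 2) γ w hw
  have hG : HasFDerivAt (fun p : ℝ × ℝ => dvR d L γ lam ε p.1 p.2)
      (b • ContinuousLinearMap.fst ℝ ℝ ℝ) (0, 0) := by
    have hGeq : (fun p : ℝ × ℝ => dvR d L γ lam ε p.1 p.2)
        = fun p : ℝ × ℝ => -(2 * γ ^ 2) * erf (A * p.1 / Q) :=
      funext fun p => dvR_eq d L γ lam ε p.1 p.2
    rw [hGeq, hbdef]
    exact hasFDerivAt_Ggen A Q γ
  have hF0 : dkR d L γ lam ε 0 0 = 0 := by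
    rw [dkR_eq]
    simp [psi_zero]
  have hG0 : dvR d L γ lam ε 0 0 = 0 := by
    rw [dvR_eq]
    simp [erf_zero]
  obtain ⟨abar, habar, hmain⟩ := final_part hh b hb
  refine ⟨abar, habar, fun α hα hle => ?_⟩
  have h1 := pgd_helper α (fun p : ℝ × ℝ => dkR d L γ lam ε p.1 p.2) Prod.fst
    (hh • ContinuousLinearMap.fst ℝ ℝ ℝ + b • ContinuousLinearMap.snd ℝ ℝ ℝ)
    (ContinuousLinearMap.fst ℝ ℝ ℝ) hF hasFDerivAt_fst hF0 rfl
  have h2 := pgd_helper α (fun p : ℝ × ℝ => dvR d L γ lam ε p.1 p.2) Prod.snd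
    (b • ContinuousLinearMap.fst ℝ ℝ ℝ)
    (ContinuousLinearMap.snd ℝ ℝ ℝ) hG hasFDerivAt_snd hG0 rfl
  have hpgdF : HasFDerivAt (pgd d L γ lam ε α)
      ((ContinuousLinearMap.fst ℝ ℝ ℝ -
          α • (hh • ContinuousLinearMap.fst ℝ ℝ ℝ + b • ContinuousLinearMap.snd ℝ ℝ ℝ)).prod
        (ContinuousLinearMap.snd ℝ ℝ ℝ - α • (b • ContinuousLinearMap.fst ℝ ℝ ℝ))) (0, 0) :=
    h1.prodMk h2
  have hT : ∀ u v : ℝ,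
      ((ContinuousLinearMap.fst ℝ ℝ ℝ -
          α • (hh • ContinuousLinearMap.fst ℝ ℝ ℝ + b • ContinuousLinearMap.snd ℝ ℝ ℝ)).prod
        (ContinuousLinearMap.snd ℝ ℝ ℝ - α • (b • ContinuousLinearMap.fst ℝ ℝ ℝ))) (u, v)
      = (u - α * (hh * u + b * v), v - α * (b * u)) := by
    intro u v
    simp [ContinuousLinearMap.prod_apply, ContinuousLinearMap.sub_apply,
      ContinuousLinearMap.smul_apply, ContinuousLinearMap.add_apply,
      ContinuousLinearMap.coe_fst', ContinuousLinearMap.coe_snd', smul_eq_mul]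
    ring_nf
  obtain ⟨hbij, hrest⟩ := hmain α hα hle _ hT
  refine ⟨hpgdF.differentiableAt, ?_, ?_⟩
  · rw [hpgdF.fderiv]; exact hbij
  · rw [hpgdF.fderiv]; exact hrest
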